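/- Let Γ be the 1-skeleton of a locally finite CAT(0) cube complex (equivalently a median graph), and let Z ⊆ VΓ be σ-quasi-convex. Then for any adjacent vertices x,y and any z_x ∈ π_Z(x), z_y ∈ π_Z(y), one has d(z_x, z_y) ≤ 1 + 2σ; in particular Z has (1+2σ)-bounded projections. -/
import Mathlib

/-- The geodesic interval between `x` and `y`: vertices lying on geodesics from
`x` to `y`. -/
def interval {V : Type*} (G : SimpleGraph V) (x y : V) : Set V :=
  {m | G.dist x m + G.dist m y = G.dist x y}

/-- The closest point projection of `v` onto `Z`. -/
def graphProj {V : Type*} (G : SimpleGraph V) (Z : Set V) (v : V) : Set V :=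
  {z | z ∈ Z ∧ G.dist v z = sInf {n | ∃ z' ∈ Z, G.dist v z' = n}}

/-- `Z` is `σ`-quasi-convex: every vertex on a geodesic between two points of
`Z` is within distance `σ` of `Z`. -/
def QuasiConvex {V : Type*} (G : SimpleGraph V) (Z : Set V) (σ : ℕ) : Prop :=
  ∀ a ∈ Z, ∀ b ∈ Z, ∀ m ∈ interval G a b, ∃ z ∈ Z, G.dist m z ≤ σ

/-- in a median graph (1-skeleton of a CAT(0) cube complex), a
`σ`-quasi-convex set `Z` has `(1+2σ)`-bounded projections: for adjacent `x, y`
and `z_x ∈ π_Z(x)`, `z_y ∈ π_Z(y)`, `d(z_x, z_y) ≤ 1 + 2σ`. -/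
theorem median_quasiconvex_bounded_projections {V : Type*} (G : SimpleGraph V)
    (hG : G.Connected) (μ : V → V → V → V)
    (hμmem : ∀ x y z : V, μ x y z ∈ interval G x y ∧ μ x y z ∈ interval G x z ∧
      μ x y z ∈ interval G y z)
    (hμuniq : ∀ x y z m : V,
      m ∈ interval G x y → m ∈ interval G x z → m ∈ interval G y z → m = μ x y z)
    (hμlip : ∀ x x' y z : V, G.dist (μ x y z) (μ x' y z) ≤ G.dist x x')
    (Z : Set V) (σ : ℕ) (hZ : QuasiConvex G Z σ) :
    ∀ x y : V, G.Adj x y → ∀ zx ∈ graphProj G Z x, ∀ zy ∈ graphProj G Z y,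
      G.dist zx zy ≤ 1 + 2 * σ := by
  intro x y hxy zx hzx zy hzy
  obtain ⟨hzxZ, hzxd⟩ := hzx
  obtain ⟨hzyZ, hzyd⟩ := hzy
  -- minimality of zx, zy
  have hminx : ∀ z ∈ Z, G.dist x zx ≤ G.dist x z := by
    intro z hz
    rw [hzxd]
    exact Nat.sInf_le ⟨z, hz, rfl⟩
  have hminy : ∀ z ∈ Z, G.dist y zy ≤ G.dist y z := by
    intro z hz
    rw [hzyd]
    exact Nat.sInf_le ⟨z, hz, rfl⟩
  set m := μ x zx zy with hm
  set m' := μ y zx zy with hm'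
  obtain ⟨hm1, hm2, hm3⟩ := hμmem x zx zy
  obtain ⟨hn1, hn2, hn3⟩ := hμmem y zx zy
  -- d(m, zx) ≤ σ
  have hmzx : G.dist m zx ≤ σ := by
    obtain ⟨z, hz, hdz⟩ := hZ zx hzxZ zy hzyZ m hm3
    have h1 : G.dist x zx ≤ G.dist x z := hminx z hz
    have h2 : G.dist x z ≤ G.dist x m + G.dist m z := hG.dist_triangle
    have h3 : G.dist x m + G.dist m zx = G.dist x zx := hm1
    omega
  -- d(m', zy) ≤ σ
  have hmzy : G.dist m' zy ≤ σ := by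
    obtain ⟨z, hz, hdz⟩ := hZ zx hzxZ zy hzyZ m' hn3
    have h1 : G.dist y zy ≤ G.dist y z := hminy z hz
    have h2 : G.dist y z ≤ G.dist y m' + G.dist m' z := hG.dist_triangle
    have h3 : G.dist y m' + G.dist m' zy = G.dist y zy := hn2
    omega
  have hmm : G.dist m m' ≤ 1 := by
    have := hμlip x y zx zy
    rwa [(SimpleGraph.dist_eq_one_iff_adj).mpr hxy] at this
  have t1 : G.dist zx zy ≤ G.dist zx m + G.dist m zy := hG.dist_triangle
  have t2 : G.dist m zy ≤ G.dist m m' + G.dist m' zy := hG.dist_triangle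
  have s1 : G.dist zx m = G.dist m zx := SimpleGraph.dist_comm ..
  omega
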